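/- Boundary vertices versus triangles: for every integer r ≥ 1, |V_ex(r)| + 3·|T(r)| ≤ 2·|V(r)| (i.e. |V_ex(r)| ≤ 2|V(r)| − 3|T(r)|). -/

import Mathlib

/-- Vertex set of the cellular interference graph: pairs `(a,b)` identified with
the Eisenstein integer `a + bω`, where `ω = (−1+i√3)/2`, satisfying
`|Re(a+bω)| ≤ r` and `|Im(a+bω)| ≤ (√3/2)r`, i.e. `|2a − b| ≤ 2r` and `|b| ≤ r`. -/
noncomputable def V (r : ℤ) : Finset (ℤ × ℤ) :=
  (Finset.Icc (-(2 * r)) (2 * r) ×ˢ Finset.Icc (-r) r).filter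
    (fun p => |2 * p.1 - p.2| ≤ 2 * r ∧ |p.2| ≤ r)

/-- `f(a,b) = (a+b) mod 3`. -/
def f (p : ℤ × ℤ) : ℤ := (p.1 + p.2) % 3

/-- Triangle index set: `(a,b)` with `f(a,b) ≠ 0` such that all three points
`(a,b)`, `(a,b+1)`, `(a+1,b+1)` lie in `V r`. -/
noncomputable def T (r : ℤ) : Finset (ℤ × ℤ) :=
  (V r).filter (fun p => f p ≠ 0 ∧ (p.1, p.2 + 1) ∈ V r ∧ (p.1 + 1, p.2 + 1) ∈ V r)

/-- The vertex set of the triangle indexed by `p = (a,b)`: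
`{(a,b), (a,b+1), (a+1,b+1)}`. -/
def triVerts (p : ℤ × ℤ) : Finset (ℤ × ℤ) := {p, (p.1, p.2 + 1), (p.1 + 1, p.2 + 1)}

/-- The number `n_v` of triangles of `T r` whose vertex set contains `v`. -/
noncomputable def nTri (r : ℤ) (v : ℤ × ℤ) : ℕ := ((T r).filter (fun p => v ∈ triVerts p)).card

/-- The boundary vertices: those belonging to fewer than two triangles. -/
noncomputable def Vex (r : ℤ) : Finset (ℤ × ℤ) := (V r).filter (fun v => nTri r v < 2)

lemma mem_triVerts (v p : ℤ × ℤ) :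
    v ∈ triVerts p ↔ v = p ∨ v = (p.1, p.2 + 1) ∨ v = (p.1 + 1, p.2 + 1) := by
  simp [triVerts]

lemma triVerts_card (p : ℤ × ℤ) : (triVerts p).card = 3 := by
  have h1 : (p.1, p.2 + 1) ≠ ((p.1 + 1 : ℤ), (p.2 + 1 : ℤ)) := by
    simp [Prod.ext_iff]
  have h2 : p ∉ ({(p.1, p.2 + 1), (p.1 + 1, p.2 + 1)} : Finset (ℤ × ℤ)) := by
    simp [Prod.ext_iff]
  rw [triVerts, Finset.card_insert_of_notMem h2,
    Finset.card_insert_of_notMem (by simp [h1]), Finset.card_singleton]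

lemma nTri_le_two (r : ℤ) (v : ℤ × ℤ) : nTri r v ≤ 2 := by
  have key : ∀ p ∈ (T r).filter (fun p => v ∈ triVerts p),
      p = v ∨ p = (v.1, v.2 - 1) ∨ p = (v.1 - 1, v.2 - 1) := by
    intro p hp
    rw [Finset.mem_filter, mem_triVerts] at hp
    rcases hp.2 with h | h | h <;> [left; (right; left); (right; right)] <;>
      · rw [Prod.ext_iff] at h ⊢; omega
  have hm : (v.1 + v.2) % 3 = 0 ∨ (v.1 + v.2) % 3 = 1 ∨ (v.1 + v.2) % 3 = 2 := by omega
  have fT : ∀ p ∈ T r, (p.1 + p.2) % 3 ≠ 0 := by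
    intro p hp
    rw [T, Finset.mem_filter] at hp
    exact hp.2.1
  unfold nTri
  rcases hm with h | h | h
  · calc ((T r).filter (fun p => v ∈ triVerts p)).card
        ≤ ({(v.1, v.2 - 1), (v.1 - 1, v.2 - 1)} : Finset (ℤ × ℤ)).card := by
          apply Finset.card_le_card
          intro p hp
          rcases key p hp with h' | h' | h'
          · exfalso; apply fT p (Finset.mem_filter.mp hp).1; rw [h']; exact h
          · simp [h']
          · simp [h']
      _ ≤ 2 := Finset.card_insert_le _ _ |>.trans (by simp)
  · calc ((T r).filter (fun p => v ∈ triVerts p)).card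
        ≤ ({v, (v.1 - 1, v.2 - 1)} : Finset (ℤ × ℤ)).card := by
          apply Finset.card_le_card
          intro p hp
          rcases key p hp with h' | h' | h'
          · simp [h']
          · exfalso; apply fT p (Finset.mem_filter.mp hp).1; rw [h']; simp; omega
          · simp [h']
      _ ≤ 2 := Finset.card_insert_le _ _ |>.trans (by simp)
  · calc ((T r).filter (fun p => v ∈ triVerts p)).card
        ≤ ({v, (v.1, v.2 - 1)} : Finset (ℤ × ℤ)).card := by
          apply Finset.card_le_card
          intro p hp
          rcases key p hp with h' | h' | h'
          · simp [h']
          · simp [h']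
          · exfalso; apply fT p (Finset.mem_filter.mp hp).1; rw [h']; simp; omega
      _ ≤ 2 := Finset.card_insert_le _ _ |>.trans (by simp)

lemma triVerts_subset (r : ℤ) (p : ℤ × ℤ) (hp : p ∈ T r) : triVerts p ⊆ V r := by
  rw [T, Finset.mem_filter] at hp
  intro v hv
  rcases (mem_triVerts v p).mp hv with h | h | h <;> rw [h]
  · exact hp.1
  · exact hp.2.2.1
  · exact hp.2.2.2

lemma sum_nTri (r : ℤ) : ∑ v ∈ V r, nTri r v = 3 * (T r).card := by
  have : ∑ v ∈ V r, nTri r v = ∑ v ∈ V r, ∑ p ∈ T r, (if v ∈ triVerts p then 1 else 0) := by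
    apply Finset.sum_congr rfl
    intro v _
    rw [nTri, Finset.card_filter]
  rw [this, Finset.sum_comm]
  have : ∀ p ∈ T r, ∑ v ∈ V r, (if v ∈ triVerts p then 1 else 0) = 3 := by
    intro p hp
    rw [← Finset.card_filter]
    have : (V r).filter (fun v => v ∈ triVerts p) = triVerts p := by
      apply Finset.Subset.antisymm
      · intro v hv; exact (Finset.mem_filter.mp hv).2
      · intro v hv; exact Finset.mem_filter.mpr ⟨triVerts_subset r p hp hv, hv⟩
    rw [this, triVerts_card]
  rw [Finset.sum_congr rfl this, Finset.sum_const, smul_eq_mul, mul_comm]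

/-- Boundary vertices versus triangles: `|V_ex(r)| + 3·|T(r)| ≤ 2·|V(r)|`,
i.e. `|V_ex(r)| ≤ 2|V(r)| − 3|T(r)|`. -/
theorem card_Vex_le_sub (r : ℤ) (hr : 1 ≤ r) :
    (Vex r).card + 3 * (T r).card ≤ 2 * (V r).card := by
  rw [← sum_nTri r]
  have hsplit := Finset.sum_filter_add_sum_filter_not (V r) (fun v => nTri r v < 2) (nTri r)
  have hcard := Finset.card_filter_add_card_filter_not (s := V r)
    (p := fun v => nTri r v < 2)
  have hA : ∑ v ∈ (V r).filter (fun v => nTri r v < 2), nTri r v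
      ≤ ((V r).filter (fun v => nTri r v < 2)).card * 1 := by
    rw [← smul_eq_mul]
    apply Finset.sum_le_card_nsmul
    intro v hv
    have := (Finset.mem_filter.mp hv).2
    omega
  have hB : ∑ v ∈ (V r).filter (fun v => ¬ nTri r v < 2), nTri r v
      ≤ ((V r).filter (fun v => ¬ nTri r v < 2)).card * 2 := by
    rw [← smul_eq_mul]
    apply Finset.sum_le_card_nsmul
    intro v hv
    exact nTri_le_two r v
  have hVex : (Vex r).card = ((V r).filter (fun v => nTri r v < 2)).card := rfl
  omega
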